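/- 3-approximation via nearest landmark: let G be a weighted graph, S ⊆ V, and for each u let s_u ∈ S minimize d(s,u) over s ∈ S. If for vertices v,u there exists ŝ ∈ S lying on a shortest v–u path (i.e., d(v,u) = d(v,ŝ) + d(ŝ,u)), then d(v,s_u) + d(s_u,u) ≤ 3·d(v,u). -/
import Mathlib

/-- Weight (length) of a walk with respect to an edge-weight function. -/
noncomputable def wlen {V : Type*} {G : SimpleGraph V} (w : V → V → ℝ) {a b : V}
    (p : G.Walk a b) : ℝ :=
  (p.darts.map fun d => w d.toProd.1 d.toProd.2).sum

/-- Weighted shortest-path distance: infimum of weights of walks. -/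
noncomputable def wdist {V : Type*} (G : SimpleGraph V) (w : V → V → ℝ) (a b : V) : ℝ :=
  sInf {r | ∃ p : G.Walk a b, wlen w p = r}

section aux
variable {V : Type*} {G : SimpleGraph V} {w : V → V → ℝ}

lemma wlen_nonneg (hpos : ∀ a b, G.Adj a b → 0 < w a b) {a b : V} (p : G.Walk a b) :
    0 ≤ wlen w p := by
  apply List.sum_nonneg
  intro x hx
  simp only [List.mem_map] at hx
  obtain ⟨d, hd, rfl⟩ := hx
  exact (hpos _ _ d.adj).le

lemma wset_nonempty (hconn : G.Connected) (a b : V) :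
    {r | ∃ p : G.Walk a b, wlen w p = r}.Nonempty := by
  obtain ⟨p⟩ := hconn a b
  exact ⟨wlen w p, p, rfl⟩

lemma wset_bdd (hpos : ∀ a b, G.Adj a b → 0 < w a b) (a b : V) :
    BddBelow {r | ∃ p : G.Walk a b, wlen w p = r} := by
  refine ⟨0, ?_⟩
  rintro r ⟨p, rfl⟩
  exact wlen_nonneg hpos p

lemma wdist_le (hpos : ∀ a b, G.Adj a b → 0 < w a b) {a b : V} (p : G.Walk a b) :
    wdist G w a b ≤ wlen w p :=
  csInf_le (wset_bdd hpos a b) ⟨p, rfl⟩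

lemma wlen_append {a b c : V} (p : G.Walk a b) (q : G.Walk b c) :
    wlen w (p.append q) = wlen w p + wlen w q := by
  simp [wlen, SimpleGraph.Walk.darts_append]

lemma wlen_reverse (hsymm : ∀ a b, w a b = w b a) {a b : V} (p : G.Walk a b) :
    wlen w p.reverse = wlen w p := by
  simp only [wlen, SimpleGraph.Walk.darts_reverse, List.map_reverse, List.sum_reverse,
    List.map_map]
  congr 1
  ext d
  simp [SimpleGraph.Dart.symm, hsymm]

lemma wdist_symm (hconn : G.Connected) (hpos : ∀ a b, G.Adj a b → 0 < w a b)
    (hsymm : ∀ a b, w a b = w b a) (a b : V) :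
    wdist G w a b = wdist G w b a := by
  have key : ∀ x y : V, wdist G w x y ≤ wdist G w y x := by
    intro x y
    apply le_csInf (wset_nonempty hconn y x)
    rintro r ⟨p, rfl⟩
    calc wdist G w x y ≤ wlen w p.reverse := wdist_le hpos p.reverse
      _ = wlen w p := wlen_reverse hsymm p
  exact le_antisymm (key a b) (key b a)

lemma wdist_triangle (hconn : G.Connected) (hpos : ∀ a b, G.Adj a b → 0 < w a b)
    (a b c : V) : wdist G w a c ≤ wdist G w a b + wdist G w b c := by
  have h : wdist G w a c - wdist G w a b ≤ wdist G w b c := by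
    apply le_csInf (wset_nonempty hconn b c)
    rintro r ⟨q, rfl⟩
    rw [sub_le_iff_le_add, ← sub_le_iff_le_add']
    apply le_csInf (wset_nonempty hconn a b)
    rintro r ⟨p, rfl⟩
    rw [sub_le_iff_le_add']
    calc wdist G w a c ≤ wlen w (p.append q) := wdist_le hpos _
      _ = wlen w q + wlen w p := by rw [wlen_append]; ring
  linarith

lemma wdist_nonneg (hconn : G.Connected) (hpos : ∀ a b, G.Adj a b → 0 < w a b) (a b : V) :
    0 ≤ wdist G w a b := by
  apply le_csInf (wset_nonempty hconn a b)
  rintro r ⟨p, rfl⟩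
  exact wlen_nonneg hpos p

end aux

theorem landmark_three_approx {V : Type*} [Fintype V] [DecidableEq V]
    (G : SimpleGraph V) (hconn : G.Connected)
    (w : V → V → ℝ) (hpos : ∀ a b, G.Adj a b → 0 < w a b)
    (hsymm : ∀ a b, w a b = w b a)
    (S : Finset V) (hS : S.Nonempty) (v u : V)
    (su : V) (hsu : su ∈ S) (hmin : ∀ s ∈ S, wdist G w su u ≤ wdist G w s u)
    (sHat : V) (hsHat : sHat ∈ S)
    (hon : wdist G w v u = wdist G w v sHat + wdist G w sHat u) :
    wdist G w v su + wdist G w su u ≤ 3 * wdist G w v u := by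
  have h1 : wdist G w su u ≤ wdist G w sHat u := hmin sHat hsHat
  have h2 : wdist G w sHat u ≤ wdist G w v u := by
    have := wdist_nonneg hconn hpos v sHat
    linarith
  have h3 : wdist G w v su ≤ wdist G w v u + wdist G w u su :=
    wdist_triangle hconn hpos v u su
  have h4 : wdist G w u su = wdist G w su u := wdist_symm hconn hpos hsymm u su
  linarith
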